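/- (Tomas–Stein inequality for discrete extension operators) Let S ⊂ ℤ^r be finite, a : S → ℂ with ∑_{s∈S}|a(s)|² = 1, and w : ℤ^r → [0,1] with w = 1 on S and finite support S'. Define F_a(α) = ∑_{s∈S} a(s) e(s·α) and F(α) = ∑_{s∈S'} w(s) e(s·α) on 𝕋^r. Then for every λ > 0, with E_λ = {α ∈ 𝕋^r : |F_a(α)| ≥ λ} and g = 1_{E_λ}, one has λ²|E_λ|² ≤ ⟨g ∗ |F|, g⟩ = ∫∫ 1_{E_λ}(α) |F(α−β)| 1_{E_λ}(β) dα dβ. -/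

import Mathlib

open MeasureTheory Finset

/-- `e x = exp(2πix)`. -/
noncomputable def e (x : ℝ) : ℂ := Complex.exp (2 * Real.pi * Complex.I * x)

lemma e_continuous : Continuous e :=
  Complex.continuous_exp.comp (continuous_const.mul Complex.continuous_ofReal)

lemma norm_e (x : ℝ) : ‖e x‖ = 1 := by
  have h : (2 * (Real.pi : ℂ) * Complex.I * x) = ((2 * Real.pi * x : ℝ) : ℂ) * Complex.I := by
    push_cast; ring
  rw [e, h, Complex.norm_exp_ofReal_mul_I]

lemma e_add (x y : ℝ) : e (x + y) = e x * e y := by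
  rw [e, e, e, ← Complex.exp_add]; congr 1; push_cast; ring

lemma conj_e (x : ℝ) : (starRingEnd ℂ) (e x) = e (-x) := by
  rw [e, e, ← Complex.exp_conj]
  congr 1
  simp only [map_mul, Complex.conj_I, Complex.conj_ofReal, map_ofNat]
  push_cast; ring

/-- the Tomas–Stein inequality for discrete extension operators:
`λ²|E_λ|² ≤ ⟨g ∗ |F|, g⟩`. -/
theorem stmt18 (r : ℕ) (S S' : Finset (Fin r → ℤ))
    (a : (Fin r → ℤ) → ℂ) (w : (Fin r → ℤ) → ℝ)
    (ha : ∑ s ∈ S, ‖a s‖ ^ 2 = 1)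
    (hw0 : ∀ s, 0 ≤ w s) (hw1 : ∀ s, w s ≤ 1)
    (hwS : ∀ s ∈ S, w s = 1) (hwS' : ∀ s, s ∉ S' → w s = 0)
    (lam : ℝ) (hlam : 0 < lam) :
    let Fa : (Fin r → ℝ) → ℂ := fun α => ∑ s ∈ S, a s * e (∑ i, (s i : ℝ) * α i)
    let F : (Fin r → ℝ) → ℂ := fun α => ∑ s ∈ S', (w s : ℂ) * e (∑ i, (s i : ℝ) * α i)
    let E : Set (Fin r → ℝ) := {α | (∀ i, α i ∈ Set.Ico (0 : ℝ) 1) ∧ lam ≤ ‖Fa α‖}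
    lam ^ 2 * ((volume E).toReal) ^ 2 ≤ ∫ α in E, ∫ β in E, ‖F (α - β)‖ := by
  intro Fa F E
  -- basic continuity
  have hchar : ∀ s : Fin r → ℤ, Continuous (fun α : Fin r → ℝ => e (∑ i, (s i : ℝ) * α i)) := by
    intro s
    exact e_continuous.comp (continuous_finset_sum _ (fun i _ => continuous_const.mul (continuous_apply i)))
  have hFa_cont : Continuous Fa :=
    continuous_finset_sum _ (fun s _ => continuous_const.mul (hchar s))
  have hF_cont : Continuous F :=
    continuous_finset_sum _ (fun s _ => continuous_const.mul (hchar s))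
  -- E is measurable with finite measure
  have hE_meas : MeasurableSet E := by
    have : E = (Set.pi Set.univ fun _ : Fin r => Set.Ico (0:ℝ) 1) ∩ {α | lam ≤ ‖Fa α‖} := by
      ext α; simp [E, Set.mem_pi, Set.mem_setOf_eq]
    rw [this]
    exact (MeasurableSet.univ_pi fun _ => measurableSet_Ico).inter
      (measurableSet_le measurable_const hFa_cont.norm.measurable)
  have hE_fin : volume E < ⊤ := by
    have hsub : E ⊆ Set.pi Set.univ fun _ : Fin r => Set.Ico (0:ℝ) 1 := by
      intro α hα i _; exact hα.1 i
    calc volume E ≤ volume (Set.pi Set.univ fun _ : Fin r => Set.Ico (0:ℝ) 1) :=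
          measure_mono hsub
      _ = ∏ _i : Fin r, volume (Set.Ico (0:ℝ) 1) := volume_pi_pi _
      _ < ⊤ := by simp [Real.volume_Ico]
  haveI hfinm : IsFiniteMeasure (volume.restrict E) :=
    ⟨by rwa [Measure.restrict_apply_univ]⟩
  -- integrability of bounded a.e.-strongly-measurable functions on E
  have key_int : ∀ {X : Type} [inst : NormedAddCommGroup X] (f : (Fin r → ℝ) → X) (C : ℝ),
      AEStronglyMeasurable f (volume.restrict E) → (∀ x, ‖f x‖ ≤ C) →
      IntegrableOn f E := by
    intro X inst f C hf hC
    exact (integrable_const C).mono' hf (Filter.Eventually.of_forall hC)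
  -- h is the unimodular sign of Fa on E
  set h : (Fin r → ℝ) → ℂ := E.indicator (fun α => Fa α / (‖Fa α‖ : ℂ)) with hh_def
  have hh_meas : Measurable h :=
    Measurable.indicator (hFa_cont.measurable.div
      (Complex.measurable_ofReal.comp hFa_cont.norm.measurable)) hE_meas
  have hh_bound : ∀ α, ‖h α‖ ≤ 1 := by
    intro α
    rw [hh_def]
    by_cases hα : α ∈ E
    · rw [Set.indicator_of_mem hα]
      rw [norm_div, Complex.norm_real, Real.norm_eq_abs, abs_norm]
      exact div_self_le_one _
    · rw [Set.indicator_of_notMem hα]; simp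
  -- the Fourier-type coefficients
  set c : (Fin r → ℤ) → ℂ :=
    fun s => ∫ α in E, (starRingEnd ℂ) (h α) * e (∑ i, (s i : ℝ) * α i) with hc_def
  -- measurability and integrability of basic integrands
  have hg_meas : ∀ s : Fin r → ℤ,
      Measurable (fun α => (starRingEnd ℂ) (h α) * e (∑ i, (s i : ℝ) * α i)) := by
    intro s
    exact ((Complex.continuous_conj.measurable).comp hh_meas).mul (hchar s).measurable
  have hg_bound : ∀ (s : Fin r → ℤ) (α : Fin r → ℝ),
      ‖(starRingEnd ℂ) (h α) * e (∑ i, (s i : ℝ) * α i)‖ ≤ 1 := by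
    intro s α
    rw [norm_mul, RCLike.norm_conj, norm_e, mul_one]
    exact hh_bound α
  -- Step A : lam * |E| ≤ ∫_E ‖Fa‖
  have hFa_bdd : ∀ α, ‖Fa α‖ ≤ ∑ s ∈ S, ‖a s‖ := by
    intro α
    refine (norm_sum_le _ _).trans (Finset.sum_le_sum fun s _ => ?_)
    rw [norm_mul, norm_e, mul_one]
  have stepA : lam * (volume E).toReal ≤ ∫ α in E, ‖Fa α‖ := by
    rw [mul_comm, ← smul_eq_mul]; change volume.real E • lam ≤ _
    refine setIntegral_ge_of_const_le hE_meas hE_fin.ne (fun α hα => hα.2) ?_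
    exact key_int _ (∑ s ∈ S, ‖a s‖) hFa_cont.norm.aestronglyMeasurable.restrict
      (fun x => by rw [Real.norm_eq_abs, abs_norm]; exact hFa_bdd x)
  -- Step B : ∫_E ‖Fa‖ = the real number whose coercion is ∑ a s * c s
  have hI0 : ∫ α in E, (starRingEnd ℂ) (h α) * Fa α = ((∫ α in E, ‖Fa α‖ : ℝ) : ℂ) := by
    refine Eq.trans ?_ integral_ofReal
    refine setIntegral_congr_fun hE_meas (fun α hα => ?_)
    have hne : (‖Fa α‖ : ℂ) ≠ 0 := by
      simp only [ne_eq, Complex.ofReal_eq_zero, norm_eq_zero]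
      intro h0
      have h2 := hα.2
      rw [h0, norm_zero] at h2
      linarith
    rw [hh_def, Set.indicator_of_mem hα, map_div₀, Complex.conj_ofReal, div_mul_eq_mul_div,
      div_eq_iff hne, mul_comm ((starRingEnd ℂ) (Fa α)) (Fa α), Complex.mul_conj,
      Complex.normSq_eq_norm_sq]
    rw [sq, Complex.ofReal_mul]
    rfl
  have hI0' : ∫ α in E, (starRingEnd ℂ) (h α) * Fa α = ∑ s ∈ S, a s * c s := by
    have h1 : ∫ α in E, (starRingEnd ℂ) (h α) * Fa α
        = ∫ α in E, ∑ s ∈ S, a s * ((starRingEnd ℂ) (h α) * e (∑ i, (s i : ℝ) * α i)) := by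
      refine setIntegral_congr_fun hE_meas (fun α _ => ?_)
      show (starRingEnd ℂ) (h α) * (∑ s ∈ S, a s * e (∑ i, (s i : ℝ) * α i)) = _
      rw [Finset.mul_sum]
      exact Finset.sum_congr rfl fun s _ => by ring
    rw [h1, integral_finset_sum]
    · exact Finset.sum_congr rfl fun s _ => by
        rw [MeasureTheory.integral_const_mul]
    · intro s _
      refine key_int _ (‖a s‖) ?_ ?_
      · exact (measurable_const.mul (hg_meas s)).aestronglyMeasurable
      · intro α
        rw [norm_mul]
        calc ‖a s‖ * ‖(starRingEnd ℂ) (h α) * e (∑ i, (s i : ℝ) * α i)‖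
            ≤ ‖a s‖ * 1 := by
              exact mul_le_mul_of_nonneg_left (hg_bound s α) (norm_nonneg _)
          _ = ‖a s‖ := mul_one _
  have stepB : lam * (volume E).toReal ≤ ‖∑ s ∈ S, a s * c s‖ := by
    refine stepA.trans ?_
    rw [← hI0', hI0]
    rw [Complex.norm_real]
    exact le_abs_self _
  -- Step C : Cauchy–Schwarz
  have stepC : ‖∑ s ∈ S, a s * c s‖ ^ 2 ≤ ∑ s ∈ S, ‖c s‖ ^ 2 := by
    calc ‖∑ s ∈ S, a s * c s‖ ^ 2 ≤ (∑ s ∈ S, ‖a s‖ * ‖c s‖) ^ 2 := by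
          refine pow_le_pow_left₀ (norm_nonneg _) ?_ 2
          refine (norm_sum_le _ _).trans (le_of_eq ?_)
          exact Finset.sum_congr rfl fun s _ => norm_mul _ _
      _ ≤ (∑ s ∈ S, ‖a s‖ ^ 2) * ∑ s ∈ S, ‖c s‖ ^ 2 :=
          Finset.sum_mul_sq_le_sq_mul_sq S _ _
      _ = ∑ s ∈ S, ‖c s‖ ^ 2 := by rw [ha, one_mul]
  -- Step D : pass to the weight w
  have hSsub : S ⊆ S' := by
    intro s hs
    by_contra hs'
    have h1 := hwS s hs
    have h2 := hwS' s hs'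
    rw [h1] at h2
    norm_num at h2
  have stepD : ∑ s ∈ S, ‖c s‖ ^ 2 ≤ ∑ s ∈ S', w s * ‖c s‖ ^ 2 := by
    have : ∑ s ∈ S, ‖c s‖ ^ 2 = ∑ s ∈ S, w s * ‖c s‖ ^ 2 :=
      Finset.sum_congr rfl fun s hs => by rw [hwS s hs, one_mul]
    rw [this]
    refine Finset.sum_le_sum_of_subset_of_nonneg hSsub fun s _ _ => ?_
    exact mul_nonneg (hw0 s) (sq_nonneg _)
  -- splitting of F at a difference
  have hF_split : ∀ α β : Fin r → ℝ, F (α - β)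
      = ∑ s ∈ S', (w s : ℂ) * (e (∑ i, (s i : ℝ) * α i) * e (-∑ i, (s i : ℝ) * β i)) := by
    intro α β
    show ∑ s ∈ S', (w s : ℂ) * e (∑ i, (s i : ℝ) * (α - β) i) = _
    refine Finset.sum_congr rfl fun s _ => ?_
    congr 1
    have harg : ∑ i, (s i : ℝ) * (α - β) i
        = (∑ i, (s i : ℝ) * α i) + (-∑ i, (s i : ℝ) * β i) := by
      simp only [Pi.sub_apply, mul_sub]
      rw [Finset.sum_sub_distrib]
      ring
    rw [harg, e_add]
  -- conj of coefficients
  have hconj : ∀ s : Fin r → ℤ,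
      ∫ β in E, h β * e (-∑ i, (s i : ℝ) * β i) = (starRingEnd ℂ) (c s) := by
    intro s
    rw [hc_def, ← integral_conj]
    refine setIntegral_congr_fun hE_meas (fun β _ => ?_)
    rw [map_mul, Complex.conj_conj, conj_e]
  -- inner integral identity
  set G : (Fin r → ℝ) → ℂ :=
    fun α => ∫ β in E, (starRingEnd ℂ) (h α) * h β * F (α - β) with hG_def
  have hG_eq : ∀ α, G α = ∑ s ∈ S', ((w s : ℂ) * (starRingEnd ℂ) (c s))
      * ((starRingEnd ℂ) (h α) * e (∑ i, (s i : ℝ) * α i)) := by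
    intro α
    show (∫ β in E, (starRingEnd ℂ) (h α) * h β * F (α - β)) = _
    have h1 : ∀ β ∈ E, (starRingEnd ℂ) (h α) * h β * F (α - β)
        = ∑ s ∈ S', ((w s : ℂ) * ((starRingEnd ℂ) (h α) * e (∑ i, (s i : ℝ) * α i)))
            * (h β * e (-∑ i, (s i : ℝ) * β i)) := by
      intro β _
      rw [hF_split α β, Finset.mul_sum]
      exact Finset.sum_congr rfl fun s _ => by ring
    rw [setIntegral_congr_fun hE_meas h1, integral_finset_sum]
    · refine Finset.sum_congr rfl fun s _ => ?_
      rw [MeasureTheory.integral_const_mul, hconj s]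
      ring
    · intro s _
      refine key_int _ (‖(w s : ℂ) * ((starRingEnd ℂ) (h α) * e (∑ i, (s i : ℝ) * α i))‖) ?_ ?_
      · exact (measurable_const.mul (hh_meas.mul ((e_continuous.comp (by
          exact (continuous_finset_sum _ (fun i _ => continuous_const.mul (continuous_apply i))).neg
          )).measurable))).aestronglyMeasurable
      · intro β
        rw [norm_mul]
        refine mul_le_of_le_one_right (norm_nonneg _) ?_
        rw [norm_mul, norm_e, mul_one]
        exact hh_bound β
  -- Step E : the double integral equals ∑ w s ‖c s‖²
  have hG_meas : Measurable G := by
    have : G = fun α => ∑ s ∈ S', ((w s : ℂ) * (starRingEnd ℂ) (c s))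
        * ((starRingEnd ℂ) (h α) * e (∑ i, (s i : ℝ) * α i)) := funext hG_eq
    rw [this]
    exact Finset.measurable_sum _ fun s _ => measurable_const.mul (hg_meas s)
  have hG_bound : ∀ α, ‖G α‖ ≤ ∑ s ∈ S', ‖(w s : ℂ) * (starRingEnd ℂ) (c s)‖ := by
    intro α
    rw [hG_eq α]
    refine (norm_sum_le _ _).trans (Finset.sum_le_sum fun s _ => ?_)
    rw [norm_mul]
    exact mul_le_of_le_one_right (norm_nonneg _) (hg_bound s α)
  have stepE : ∫ α in E, G α = ((∑ s ∈ S', w s * ‖c s‖ ^ 2 : ℝ) : ℂ) := by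
    have h1 : ∫ α in E, G α = ∑ s ∈ S', ((w s : ℂ) * (starRingEnd ℂ) (c s)) * c s := by
      rw [setIntegral_congr_fun hE_meas (fun α _ => hG_eq α), integral_finset_sum]
      · exact Finset.sum_congr rfl fun s _ => by rw [MeasureTheory.integral_const_mul]
      · intro s _
        refine key_int _ (‖(w s : ℂ) * (starRingEnd ℂ) (c s)‖) ?_ ?_
        · exact (measurable_const.mul (hg_meas s)).aestronglyMeasurable
        · intro α
          rw [norm_mul]
          exact mul_le_of_le_one_right (norm_nonneg _) (hg_bound s α)
    rw [h1]
    push_cast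
    refine Finset.sum_congr rfl fun s _ => ?_
    rw [mul_assoc, mul_comm ((starRingEnd ℂ) (c s)) (c s), Complex.mul_conj,
      Complex.normSq_eq_norm_sq]
    push_cast
    ring
  -- Step F : bound the double integral by ∫∫ ‖F(α-β)‖
  have hFnorm_meas : StronglyMeasurable fun p : (Fin r → ℝ) × (Fin r → ℝ) => ‖F (p.1 - p.2)‖ :=
    (hF_cont.comp (continuous_fst.sub continuous_snd)).norm.stronglyMeasurable
  have hCF : ∀ γ, ‖F γ‖ ≤ ∑ s ∈ S', w s := by
    intro γ
    refine (norm_sum_le _ _).trans (Finset.sum_le_sum fun s _ => ?_)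
    rw [norm_mul, norm_e, mul_one, Complex.norm_real, Real.norm_eq_abs, abs_of_nonneg (hw0 s)]
  have hnn : ∀ α β : Fin r → ℝ, ‖(starRingEnd ℂ) (h α) * h β * F (α - β)‖ ≤ ‖F (α - β)‖ := by
    intro α β
    rw [norm_mul, norm_mul, RCLike.norm_conj]
    calc ‖h α‖ * ‖h β‖ * ‖F (α - β)‖ ≤ 1 * 1 * ‖F (α - β)‖ := by
          gcongr
          · exact hh_bound α
          · exact hh_bound β
      _ = ‖F (α - β)‖ := by ring
  have hInner_int : ∀ α : Fin r → ℝ, IntegrableOn (fun β => ‖F (α - β)‖) E := by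
    intro α
    refine key_int _ (∑ s ∈ S', w s) ?_
      (fun β => by rw [Real.norm_eq_abs, abs_norm]; exact hCF _)
    exact ((hF_cont.comp (continuous_const.sub continuous_id)).norm).aestronglyMeasurable.restrict
  have hOuter_meas : StronglyMeasurable fun α => ∫ β in E, ‖F (α - β)‖ :=
    hFnorm_meas.integral_prod_right'
  have stepF : ‖∫ α in E, G α‖ ≤ ∫ α in E, ∫ β in E, ‖F (α - β)‖ := by
    refine (norm_integral_le_integral_norm _).trans ?_
    refine integral_mono ?_ ?_ ?_
    · exact key_int _ _ hG_meas.norm.aestronglyMeasurable.restrict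
        (fun α => by rw [Real.norm_eq_abs, abs_norm]; exact hG_bound α)
    · refine key_int _ ((∑ s ∈ S', w s) * (volume E).toReal) hOuter_meas.aestronglyMeasurable ?_
      intro α
      have h1 : (0:ℝ) ≤ ∫ β in E, ‖F (α - β)‖ := integral_nonneg fun β => norm_nonneg _
      rw [Real.norm_eq_abs, abs_of_nonneg h1]
      calc ∫ β in E, ‖F (α - β)‖ ≤ ∫ β in E, (∑ s ∈ S', w s) :=
            integral_mono (hInner_int α) (integrable_const _) (fun β => hCF _)
        _ = ((∑ s ∈ S', w s) * (volume E).toReal) := by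
            rw [setIntegral_const, smul_eq_mul, mul_comm]; rfl
    · intro α
      show ‖G α‖ ≤ _
      refine (norm_integral_le_integral_norm
        ((fun β => (starRingEnd ℂ) (h α) * h β * F (α - β)))).trans ?_
      refine integral_mono ?_ (hInner_int α) (fun β => hnn α β)
      refine key_int _ (∑ s ∈ S', w s) ?_ ?_
      · refine Measurable.aestronglyMeasurable ?_
        refine ((measurable_const.mul hh_meas).mul ?_).norm
        exact hF_cont.measurable.comp (measurable_const.sub measurable_id)
      · intro β
        rw [Real.norm_eq_abs, abs_norm]
        exact (hnn α β).trans (hCF _)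
  -- put everything together
  have hvol : 0 ≤ (volume E).toReal := ENNReal.toReal_nonneg
  calc lam ^ 2 * ((volume E).toReal) ^ 2 = (lam * (volume E).toReal) ^ 2 := by ring
    _ ≤ ‖∑ s ∈ S, a s * c s‖ ^ 2 :=
        pow_le_pow_left₀ (by positivity) stepB 2
    _ ≤ ∑ s ∈ S, ‖c s‖ ^ 2 := stepC
    _ ≤ ∑ s ∈ S', w s * ‖c s‖ ^ 2 := stepD
    _ ≤ ‖∫ α in E, G α‖ := by
        rw [stepE, Complex.norm_real]
        exact le_abs_self _
    _ ≤ ∫ α in E, ∫ β in E, ‖F (α - β)‖ := stepF
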